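/- Let $X$ be a free abelian group of finite rank with an action of a finite group $\theta$, and let $\check{X} = \mathrm{Hom}(X, \mathbb{Z})$ with the dual action. Set $\underline{X} = X_\theta / \mathrm{torsion}$ (coinvariants modulo torsion) and $\check{\underline{X}} = \check{X}^\theta$ (invariants). Then the canonical pairing $(\underline{x}, y) \mapsto \langle x, y \rangle$, for $\underline{x} \in \underline{X}$ with preimage $x \in X$ and $y \in \check{\underline{X}} \subseteq \check{X}$, is well-defined and exhibits $\underline{X}$ and $\check{\underline{X}}$ as free abelian groups in perfect duality. -/

import Mathlib

/-- For a free abelian group `X` of finite rank with an action of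
a finite group `θ`, with `X̲ = X_θ/torsion` and `X̲̌ = (X̌)^θ` (invariants of
the dual), the canonical pairing `(x̲, y) ↦ ⟨x, y⟩` is well defined and is a
perfect duality between the free abelian groups `X̲` and `X̲̌`. -/
theorem stmt5 {X : Type*} [AddCommGroup X] [Module ℤ X]
    [Module.Free ℤ X] [Module.Finite ℤ X]
    {θ : Type*} [Group θ] [Finite θ] (ρ : θ →* (X ≃ₗ[ℤ] X))
    (N : Submodule ℤ X)
    (hN : N = Submodule.span ℤ {y : X | ∃ (t : θ) (x : X), y = x - ρ t x})
    (Inv : Submodule ℤ (X →ₗ[ℤ] ℤ))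
    (hInv : ∀ f : X →ₗ[ℤ] ℤ, f ∈ Inv ↔ ∀ (t : θ) (x : X), f (ρ t x) = f x) :
    ∃ p : ((X ⧸ N) ⧸ Submodule.torsion ℤ (X ⧸ N)) →ₗ[ℤ] (↥Inv →ₗ[ℤ] ℤ),
      (∀ (x : X) (f : ↥Inv),
        p (Submodule.Quotient.mk (Submodule.Quotient.mk x)) f = f.1 x) ∧
      Function.Bijective p ∧ Function.Bijective p.flip := by
  classical
  -- every invariant functional vanishes on N
  have h1 : ∀ f : ↥Inv, N ≤ LinearMap.ker (f : X →ₗ[ℤ] ℤ) := by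
    intro f
    rw [hN, Submodule.span_le]
    rintro y ⟨t, x, rfl⟩
    have hf := (hInv f.1).1 f.2 t x
    simp [LinearMap.mem_ker, hf]
  -- the descended functional vanishes on torsion
  have h2 : ∀ g : (X ⧸ N) →ₗ[ℤ] ℤ,
      Submodule.torsion ℤ (X ⧸ N) ≤ LinearMap.ker g := by
    intro g q hq
    obtain ⟨a, ha⟩ := hq
    have h0 : (a : ℤ) • g q = 0 := by
      rw [← map_smul, ← Submonoid.smul_def, ha, map_zero]
    rcases smul_eq_zero.1 h0 with h | h
    · exact absurd h (nonZeroDivisors.coe_ne_zero a)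
    · exact h
  -- the map Inv → Dual M
  let E : ↥Inv →ₗ[ℤ] (((X ⧸ N) ⧸ Submodule.torsion ℤ (X ⧸ N)) →ₗ[ℤ] ℤ) :=
    { toFun := fun f =>
        Submodule.liftQ _ (Submodule.liftQ N f.1 (h1 f)) (h2 _)
      map_add' := by
        intro f g
        apply LinearMap.ext
        intro m
        obtain ⟨q, rfl⟩ := Submodule.Quotient.mk_surjective _ m
        obtain ⟨x, rfl⟩ := Submodule.Quotient.mk_surjective N q
        simp
      map_smul' := by
        intro c f
        apply LinearMap.ext
        intro m
        obtain ⟨q, rfl⟩ := Submodule.Quotient.mk_surjective _ m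
        obtain ⟨x, rfl⟩ := Submodule.Quotient.mk_surjective N q
        simp }
  have hE_apply : ∀ (f : ↥Inv) (x : X),
      E f (Submodule.Quotient.mk (Submodule.Quotient.mk x)) = f.1 x := by
    intro f x
    rfl
  have hE : Function.Bijective E := by
    constructor
    · intro f g hfg
      ext1
      apply LinearMap.ext
      intro x
      have h := congrArg (fun h => h (Submodule.Quotient.mk
        (Submodule.Quotient.mk x) : (X ⧸ N) ⧸ Submodule.torsion ℤ (X ⧸ N))) hfg
      simpa only [hE_apply] using h
    · intro g
      have hmem : ({ toFun := fun x => g (Submodule.Quotient.mk (Submodule.Quotient.mk x))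
                     map_add' := fun a b => by simp
                     map_smul' := fun c a => by
                       exact (congrArg (fun y : X => g (Submodule.Quotient.mk
                         (Submodule.Quotient.mk y))) (int_smul_eq_zsmul ‹Module ℤ X› c a)).trans
                         <| (map_zsmul ((g.toAddMonoidHom).comp
                         (((Submodule.torsion ℤ (X ⧸ N)).mkQ.toAddMonoidHom).comp
                           N.mkQ.toAddMonoidHom)) c a).trans (zsmul_eq_mul _ _) } : X →ₗ[ℤ] ℤ)
          ∈ Inv := by
        rw [hInv]
        intro t x
        have hx : (Submodule.Quotient.mk (ρ t x) : X ⧸ N)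
            = Submodule.Quotient.mk x := by
          rw [Submodule.Quotient.eq]
          have hmem2 : x - ρ t x ∈ N := by
            rw [hN]; exact Submodule.subset_span ⟨t, x, rfl⟩
          simpa using N.neg_mem hmem2
        show g (Submodule.Quotient.mk (Submodule.Quotient.mk (ρ t x)))
          = g (Submodule.Quotient.mk (Submodule.Quotient.mk x))
        rw [hx]
      refine ⟨⟨_, hmem⟩, ?_⟩
      apply LinearMap.ext
      intro m
      obtain ⟨q, rfl⟩ := Submodule.Quotient.mk_surjective _ m
      obtain ⟨x, rfl⟩ := Submodule.Quotient.mk_surjective N q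
      rw [hE_apply]
      rfl
  -- M is finite free
  haveI hfq : Module.Finite ℤ (X ⧸ N) := by
    convert Module.Finite.quotient ℤ (M := X) N using 2
    exact ((AddCommGroup.uniqueIntModule).uniq _).trans
      ((AddCommGroup.uniqueIntModule).uniq _).symm
    have hmod : ‹Module ℤ X› = AddCommGroup.toIntModule X := Subsingleton.elim _ _
    subst hmod
    infer_instance
  haveI : Module.Finite ℤ ((X ⧸ N) ⧸ Submodule.torsion ℤ (X ⧸ N)) :=
    Module.Finite.quotient ℤ _
  haveI : Module.IsTorsionFree ℤ ((X ⧸ N) ⧸ Submodule.torsion ℤ (X ⧸ N)) :=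
    Submodule.QuotientTorsion.instIsTorsionFree
  haveI : Module.Free ℤ ((X ⧸ N) ⧸ Submodule.torsion ℤ (X ⧸ N)) :=
    Module.free_of_finite_type_torsion_free'
  -- the equivalence version of E
  let Ee : ↥Inv ≃ₗ[ℤ] Module.Dual ℤ ((X ⧸ N) ⧸ Submodule.torsion ℤ (X ⧸ N)) :=
    LinearEquiv.ofBijective E hE
  refine ⟨E.flip, ?_, ?_, ?_⟩
  · intro x f
    simpa using hE_apply f x
  · have hp : ⇑E.flip = ⇑(Ee.dualMap)
        ∘ ⇑(Module.evalEquiv ℤ ((X ⧸ N) ⧸ Submodule.torsion ℤ (X ⧸ N))) := by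
      funext m
      apply LinearMap.ext
      intro f
      simp [Ee, Module.Dual.eval_apply, LinearEquiv.dualMap_apply,
        LinearEquiv.ofBijective_apply]
    rw [hp]
    exact Ee.dualMap.bijective.comp (Module.evalEquiv ℤ _).bijective
  · rw [LinearMap.flip_flip]
    exact hE
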